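/- Let β, γ ∈ ℝ, b > 0, let Π : [0,b) → ℝ be a Poincaré half-map datum, and let B, α, δ ∈ ℝ with B > δ > 0 be such that X^sl(u) > 0 for all u ∈ [Π(x), x] and all x ∈ [0,b). Define Ĩ(x) = ∫_{Π(x)}^{x} u/X^sl(u) du. Then for every x ∈ (0,b): Ĩ'(x) = x·(x − Π(x)) · (αβ·x·Π(x) + β(B−δ)·(x + Π(x)) − α − γ(B−δ)) / ((1+δ)·X^sl(x)·X^sl(Π(x))·V(x)). -/

import Mathlib

open Set intervalIntegral MeasureTheory

lemma hasDerivAt_parametric (f P : ℝ → ℝ) (x₀ p' : ℝ) (U : Set ℝ) (hU : IsOpen U)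
    (hK : Set.Icc (P x₀) x₀ ⊆ U) (hf : ContinuousOn f U)
    (hP : HasDerivAt P p' x₀) (hPx : P x₀ < 0) (hx0 : 0 < x₀) :
    HasDerivAt (fun x => ∫ u in P x..x, f u) (f x₀ - f (P x₀) * p') x₀ := by
  obtain ⟨ε, hε, hthick⟩ :=
    (isCompact_Icc : IsCompact (Set.Icc (P x₀) x₀)).exists_thickening_subset_open hU hK
  set ε' := ε / 2 with hε'def
  have hε' : 0 < ε' := by positivity
  have hIccU : Set.Icc (P x₀ - ε') (x₀ + ε') ⊆ U := by
    intro y hy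
    apply hthick
    rw [Metric.mem_thickening_iff]
    rcases le_or_gt y (P x₀) with h | h
    · exact ⟨P x₀, ⟨le_refl _, (hPx.trans hx0).le⟩, by
        rw [Real.dist_eq, abs_of_nonpos (by linarith)]
        have := hy.1; simp only [hε'def] at *; linarith⟩
    rcases le_or_gt y x₀ with h2 | h2
    · exact ⟨y, ⟨h.le, h2⟩, by rw [Real.dist_eq, sub_self, abs_zero]; exact hε⟩
    · exact ⟨x₀, ⟨(hPx.trans hx0).le, le_refl _⟩, by
        rw [Real.dist_eq, abs_of_nonneg (by linarith)]
        have := hy.2; simp only [hε'def] at *; linarith⟩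
  have hfIcc : ContinuousOn f (Set.Icc (P x₀ - ε') (x₀ + ε')) := hf.mono hIccU
  set G : ℝ → ℝ := fun y => ∫ t in (0:ℝ)..y, f t with hG
  have hGd : ∀ y ∈ Set.Ioo (P x₀ - ε') (x₀ + ε'), HasDerivAt G (f y) y := by
    intro y hy
    apply intervalIntegral.integral_hasDerivAt_right
    · apply (hfIcc.mono _).intervalIntegrable
      intro t ht
      rcases Set.mem_uIcc.mp ht with h | h
      · exact ⟨by linarith [h.1, hPx, hε'], by linarith [h.2, hx0, hy.2]⟩
      · exact ⟨by linarith [h.1, hy.1], by linarith [h.2, hx0, hε']⟩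
    · exact ContinuousOn.stronglyMeasurableAtFilter isOpen_Ioo
        (hfIcc.mono Set.Ioo_subset_Icc_self) y hy
    · exact (hfIcc.mono Set.Ioo_subset_Icc_self).continuousAt (isOpen_Ioo.mem_nhds hy)
  have hx₀mem : x₀ ∈ Set.Ioo (P x₀ - ε') (x₀ + ε') :=
    ⟨by linarith [hPx], by linarith⟩
  have hPx₀mem : P x₀ ∈ Set.Ioo (P x₀ - ε') (x₀ + ε') :=
    ⟨by linarith, by linarith⟩
  have hH : HasDerivAt (fun x => G x - G (P x)) (f x₀ - f (P x₀) * p') x₀ :=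
    (hGd x₀ hx₀mem).sub ((hGd (P x₀) hPx₀mem).comp x₀ hP)
  apply hH.congr_of_eventuallyEq
  have hxev : ∀ᶠ x in nhds x₀, |x - x₀| < ε' := by
    filter_upwards [Metric.ball_mem_nhds x₀ hε'] with x hx
    simpa [Real.dist_eq] using hx
  have hPev : ∀ᶠ x in nhds x₀, |P x - P x₀| < ε' := by
    filter_upwards [hP.continuousAt.preimage_mem_nhds (Metric.ball_mem_nhds (P x₀) hε')] with x hx
    simpa [Real.dist_eq] using hx
  filter_upwards [hxev, hPev] with x hx hPx'
  have h1 : Set.uIcc (0:ℝ) x ⊆ Set.Icc (P x₀ - ε') (x₀ + ε') := by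
    apply Set.uIcc_subset_Icc ⟨by linarith, by linarith⟩
    cases' abs_lt.mp hx with a b
    exact ⟨by linarith, by linarith⟩
  have h2 : Set.uIcc (0:ℝ) (P x) ⊆ Set.Icc (P x₀ - ε') (x₀ + ε') := by
    apply Set.uIcc_subset_Icc ⟨by linarith, by linarith⟩
    cases' abs_lt.mp hPx' with a b
    exact ⟨by linarith, by linarith⟩
  have i1 : IntervalIntegrable f volume 0 x := (hfIcc.mono h1).intervalIntegrable
  have i2 : IntervalIntegrable f volume (P x) 0 :=
    ((hfIcc.mono h2).intervalIntegrable).symm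
  have : (∫ u in P x..x, f u) = (∫ u in P x..(0:ℝ), f u) + ∫ u in (0:ℝ)..x, f u :=
    (intervalIntegral.integral_add_adjacent_intervals i2 i1).symm
  rw [this, intervalIntegral.integral_symm]
  simp [hG]
  ring

/-- `V(x) = βx² − γx + 1`. -/
def Vq (β γ x : ℝ) : ℝ := β * x ^ 2 - γ * x + 1

/-- The sliding vector field `X^sl(x) = (B − δ + αx)/(1 + δ)`. -/
noncomputable def Xsl (B α δ x : ℝ) : ℝ := (B - δ + α * x) / (1 + δ)

/-- The slow divergence integral (up to a positive constant)
`Ĩ(x) = ∫_{P x}^{x} u / X^sl(u) du`. -/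
noncomputable def Itil (B α δ : ℝ) (P : ℝ → ℝ) (x : ℝ) : ℝ :=
  ∫ u in (P x)..x, u / Xsl B α δ u

/-- Equation (3.1): the derivative of the slow divergence integral `Ĩ` along a
Poincaré half-map datum `P` on `[0,b)`. -/
theorem slow_divergence_integral_derivative (β γ b B α δ : ℝ)
    (hb : 0 < b) (hBδ : B > δ) (hδ : δ > 0) (P : ℝ → ℝ)
    (hdiff : DifferentiableOn ℝ P (Set.Ico 0 b))
    (hP0 : P 0 = 0)
    (hPneg : ∀ x ∈ Set.Ioo 0 b, P x < 0)
    (hV : ∀ x ∈ Set.Ioo 0 b, ∀ u ∈ Set.Icc (P x) x, Vq β γ u > 0)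
    (hint : ∀ x ∈ Set.Ioo 0 b, ∫ u in (P x)..x, u / Vq β γ u = 0)
    (hXsl : ∀ x ∈ Set.Ico 0 b, ∀ u ∈ Set.Icc (P x) x, Xsl B α δ u > 0) :
    ∀ x ∈ Set.Ioo 0 b,
      deriv (Itil B α δ P) x =
        x * (x - P x) *
          (α * β * x * P x + β * (B - δ) * (x + P x) - α - γ * (B - δ)) /
          ((1 + δ) * Xsl B α δ x * Xsl B α δ (P x) * Vq β γ x) := by
  intro x hx
  obtain ⟨hx0, hxb⟩ := hx
  have hxmem : x ∈ Set.Ioo 0 b := ⟨hx0, hxb⟩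
  have hPx : P x < 0 := hPneg x hxmem
  have hxIco : x ∈ Set.Ico 0 b := ⟨hx0.le, hxb⟩
  have hPle : P x ≤ x := by linarith
  have hPdiff : DifferentiableAt ℝ P x :=
    (hdiff.mono Set.Ioo_subset_Ico_self).differentiableAt (isOpen_Ioo.mem_nhds hxmem)
  have hP : HasDerivAt P (deriv P x) x := hPdiff.hasDerivAt
  set p' := deriv P x with hp'def
  have h1δ : (0:ℝ) < 1 + δ := by linarith
  -- X side
  have hXc : Continuous (Xsl B α δ) := by
    unfold Xsl; exact (continuous_const.add (continuous_const.mul continuous_id)).div_const _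
  have hU1 : IsOpen ((Xsl B α δ) ⁻¹' Set.Ioi 0) := isOpen_Ioi.preimage hXc
  have hK1 : Set.Icc (P x) x ⊆ (Xsl B α δ) ⁻¹' Set.Ioi 0 := fun u hu => hXsl x hxIco u hu
  have hf1 : ContinuousOn (fun u => u / Xsl B α δ u) ((Xsl B α δ) ⁻¹' Set.Ioi 0) :=
    ContinuousOn.div continuousOn_id hXc.continuousOn (fun u hu => ne_of_gt hu)
  have D1 := hasDerivAt_parametric (fun u => u / Xsl B α δ u) P x p' _ hU1 hK1 hf1 hP hPx hx0
  have hderiv : deriv (Itil B α δ P) x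
      = x / Xsl B α δ x - P x / Xsl B α δ (P x) * p' := D1.deriv
  -- V side
  have hVc : Continuous (Vq β γ) := by
    unfold Vq; continuity
  have hU2 : IsOpen ((Vq β γ) ⁻¹' Set.Ioi 0) := isOpen_Ioi.preimage hVc
  have hK2 : Set.Icc (P x) x ⊆ (Vq β γ) ⁻¹' Set.Ioi 0 := fun u hu => hV x hxmem u hu
  have hf2 : ContinuousOn (fun u => u / Vq β γ u) ((Vq β γ) ⁻¹' Set.Ioi 0) :=
    ContinuousOn.div continuousOn_id hVc.continuousOn (fun u hu => ne_of_gt hu)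
  have D2 := hasDerivAt_parametric (fun u => u / Vq β γ u) P x p' _ hU2 hK2 hf2 hP hPx hx0
  have hev : (fun y => ∫ u in P y..y, u / Vq β γ u) =ᶠ[nhds x] fun _ => (0:ℝ) := by
    filter_upwards [isOpen_Ioo.mem_nhds hxmem] with y hy using hint y hy
  have D2' : HasDerivAt (fun y => ∫ u in P y..y, u / Vq β γ u) 0 x :=
    (hasDerivAt_const x (0:ℝ)).congr_of_eventuallyEq hev
  have hrel : x / Vq β γ x - P x / Vq β γ (P x) * p' = 0 := D2.unique D2'
  -- nonzero facts
  have hVx : 0 < Vq β γ x := hV x hxmem x ⟨hPle, le_refl x⟩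
  have hVP : 0 < Vq β γ (P x) := hV x hxmem (P x) ⟨le_refl _, hPle⟩
  have hXx : 0 < Xsl B α δ x := hXsl x hxIco x ⟨hPle, le_refl x⟩
  have hXP : 0 < Xsl B α δ (P x) := hXsl x hxIco (P x) ⟨le_refl _, hPle⟩
  have hPne : P x ≠ 0 := ne_of_lt hPx
  have hnx : 0 < B - δ + α * x := by
    have h := hXx; unfold Xsl at h
    rcases div_pos_iff.mp h with ⟨h', _⟩ | ⟨_, h2⟩
    · exact h'
    · linarith
  have hnP : 0 < B - δ + α * P x := by
    have h := hXP; unfold Xsl at h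
    rcases div_pos_iff.mp h with ⟨h', _⟩ | ⟨_, h2⟩
    · exact h'
    · linarith
  have hp' : p' = x * Vq β γ (P x) / (P x * Vq β γ x) := by
    field_simp at hrel ⊢
    linarith
  rw [hderiv, hp']
  unfold Xsl Vq
  unfold Vq at hVx hVP
  field_simp [hnx.ne', hnP.ne', hVx.ne', hVP.ne', hPne, h1δ.ne']
  have hA : B - δ + x * α ≠ 0 := by linarith
  have hB' : x * (x * β - γ) + 1 ≠ 0 := by nlinarith
  rw [div_sub_div _ _ hA hB', div_eq_div_iff (mul_ne_zero hA hB') (mul_ne_zero hA hB')]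
  ring
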